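/- arXiv:1404.3955 — 3 statements merged into one kernel-verified Lean document; each statement's English description precedes it below -/
import Mathlib

section
/- Let M be a symmetric n×n matrix over ℚ of rank r, and suppose the top-left r×r submatrix M' of M is invertible. Then there exists a unique n×r matrix R over ℚ whose top r×r block is the identity matrix and which satisfies M = R * M' * Rᵀ. -/
open Matrix

/-- The top-left `r × r` submatrix of an `n × n` matrix. -/
def topLeft {n r : ℕ} (hrn : r ≤ n) (M : Matrix (Fin n) (Fin n) ℚ) :
    Matrix (Fin r) (Fin r) ℚ :=
  M.submatrix (Fin.castLE hrn) (Fin.castLE hrn)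

/-- The top `r × r` block of an `n × r` matrix. -/
def topBlock {n r : ℕ} (hrn : r ≤ n) (R : Matrix (Fin n) (Fin r) ℚ) :
    Matrix (Fin r) (Fin r) ℚ :=
  R.submatrix (Fin.castLE hrn) id

theorem unique_R {n r : ℕ} (hrn : r ≤ n) (M : Matrix (Fin n) (Fin n) ℚ)
    (hsym : M.IsSymm) (hrank : M.rank = r)
    (hM' : IsUnit (topLeft hrn M)) :
    ∃! R : Matrix (Fin n) (Fin r) ℚ,
      topBlock hrn R = 1 ∧ M = R * topLeft hrn M * Rᵀ := by
  set M' : Matrix (Fin r) (Fin r) ℚ := topLeft hrn M with hM'def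
  have hdet : IsUnit M'.det := (isUnit_iff_isUnit_det _).mp hM'
  have hMM : M' * M'⁻¹ = 1 := mul_nonsing_inv _ hdet
  have hMM' : M'⁻¹ * M' = 1 := nonsing_inv_mul _ hdet
  -- A : left n×r block of M
  set A : Matrix (Fin n) (Fin r) ℚ := M.submatrix id (Fin.castLE hrn) with hAdef
  -- E : embedding matrix
  set E : Matrix (Fin n) (Fin r) ℚ :=
    fun k j => if k = Fin.castLE hrn j then (1 : ℚ) else 0 with hEdef
  have hA_ME : A = M * E := by
    ext i j
    simp only [Matrix.mul_apply]
    simp [hAdef, hEdef, Matrix.mul_apply, Finset.sum_ite_eq, Finset.sum_ite_eq']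
  have hAT : Aᵀ = M.submatrix (Fin.castLE hrn) id := by
    ext j i
    simpa [hAdef] using (congrFun (congrFun hsym i) (Fin.castLE hrn j)).symm
  have htopA : Aᵀ * E = M' := by
    ext j k
    simp only [Matrix.mul_apply, hAT]
    simp [Matrix.mul_apply, hEdef, hAT, hM'def, topLeft, Finset.sum_ite_eq, Finset.sum_ite_eq']
  -- rank of A is r
  have hAle : A.rank ≤ r := A.rank_le_card_width.trans (by simp)
  have hAge : r ≤ A.rank := by
    have h1 : M'.rank = r := by
      rw [Matrix.rank_of_isUnit _ hM']; simp
    calc r = (Aᵀ * E)ᵀ.rank := by rw [htopA, Matrix.rank_transpose, h1]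
    _ = (Eᵀ * A).rank := by rw [Matrix.transpose_mul, Matrix.transpose_transpose]
    _ ≤ A.rank := Matrix.rank_mul_le_right _ _
  have hArank : A.rank = r := le_antisymm hAle hAge
  -- range of A equals range of M
  have hle : LinearMap.range A.mulVecLin ≤ LinearMap.range M.mulVecLin := by
    rw [hA_ME, Matrix.mulVecLin_mul]
    exact LinearMap.range_comp_le_range _ _
  have heq : LinearMap.range A.mulVecLin = LinearMap.range M.mulVecLin := by
    apply Submodule.eq_of_le_of_finrank_le hle
    change M.rank ≤ A.rank
    rw [hArank, hrank]
  -- every column of M is in range of A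
  have hcol : ∀ j : Fin n, ∃ c : Fin r → ℚ, A.mulVec c = fun i => M i j := by
    intro j
    have : (fun i => M i j) ∈ LinearMap.range M.mulVecLin := by
      refine ⟨Pi.single j 1, ?_⟩
      ext i
      simp [Matrix.mulVecLin_apply, Matrix.mulVec_single]
    rw [← heq] at this
    exact this
  choose c hc using hcol
  set C : Matrix (Fin r) (Fin n) ℚ := fun k j => c j k with hCdef
  have hMAC : M = A * C := by
    ext i j
    have := congrFun (hc j) i
    simp only [Matrix.mul_apply]
    simpa [Matrix.mulVec, Matrix.mul_apply, dotProduct, hCdef] using this.symm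
  -- top rows of M = A * C gives M' * C = Aᵀ
  have hEt : Eᵀ * M = M.submatrix (Fin.castLE hrn) id := by
    ext j i
    simp only [Matrix.mul_apply, Matrix.transpose_apply]
    simp [Matrix.mul_apply, hEdef, Finset.sum_ite_eq, Finset.sum_ite_eq']
  have hEtA : Eᵀ * A = M' := by
    ext j k
    simp only [Matrix.mul_apply, Matrix.transpose_apply]
    simp [Matrix.mul_apply, hEdef, hAdef, hM'def, topLeft, Finset.sum_ite_eq, Finset.sum_ite_eq']
  have hM'C : M' * C = Aᵀ := by
    have := congrArg (fun X => Eᵀ * X) hMAC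
    rw [hEt, ← Matrix.mul_assoc, hEtA] at this
    rw [← this, hAT]
  have hC : C = M'⁻¹ * Aᵀ := by
    rw [← hM'C, ← Matrix.mul_assoc, hMM', Matrix.one_mul]
  -- M' is symmetric so M'⁻¹ᵀ = M'⁻¹
  have hM'sym : M'ᵀ = M' := by
    ext j k
    simpa [hM'def, topLeft] using congrFun (congrFun hsym (Fin.castLE hrn j)) (Fin.castLE hrn k)
  have hinvsym : (M'⁻¹)ᵀ = M'⁻¹ := by
    rw [Matrix.transpose_nonsing_inv, hM'sym]
  -- the candidate
  refine ⟨A * M'⁻¹, ⟨?_, ?_⟩, ?_⟩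
  · -- top block is 1
    have : topBlock hrn (A * M'⁻¹) = M' * M'⁻¹ := by
      ext j k
      simp [topBlock, Matrix.mul_apply, hAdef, hM'def, topLeft]
    rw [this, hMM]
  · -- M = R M' Rᵀ
    rw [Matrix.transpose_mul, hinvsym]
    calc M = A * C := hMAC
    _ = A * (M'⁻¹ * Aᵀ) := by rw [hC]
    _ = A * M'⁻¹ * M' * (M'⁻¹ * Aᵀ) := by
        rw [Matrix.mul_assoc A M'⁻¹ M', hMM', Matrix.mul_one]
  · -- uniqueness
    rintro R ⟨hRtop, hRM⟩
    have hRTE : Rᵀ * E = 1 := by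
      ext k j
      have := congrFun (congrFun hRtop j) k
      simp only [topBlock, Matrix.submatrix_apply, id] at this
      simp only [Matrix.mul_apply, Matrix.transpose_apply]
      simp [Matrix.mul_apply, hEdef, Finset.sum_ite_eq, Finset.sum_ite_eq', this,
        Matrix.one_apply, eq_comm]
    have hAR : A = R * M' := by
      rw [hA_ME, hRM, Matrix.mul_assoc, Matrix.mul_assoc, hRTE, Matrix.mul_one]
    rw [hAR, Matrix.mul_assoc, hMM, Matrix.mul_one]
end

section
/- Let M be a symmetric n×n matrix over ℚ of rank r whose top-left r×r submatrix M' is invertible, and set R := N * M'⁻¹, where N is the n×r matrix consisting of the first r columns of M. If A is any n×m matrix over ℚ with M = A * Aᵀ, and A' denotes the r×m matrix consisting of the first r rows of A, then M' = A' * A'ᵀ and A = R * A'. In particular, any matrix A with M = A * Aᵀ is uniquely determined by its first r rows. -/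
open Matrix

/-- The `n × r` submatrix on the first `r` columns of an `n × n` matrix. -/
def firstCols {n r : ℕ} (hrn : r ≤ n) (M : Matrix (Fin n) (Fin n) ℚ) :
    Matrix (Fin n) (Fin r) ℚ :=
  M.submatrix id (Fin.castLE hrn)

/-- The `r × m` submatrix on the first `r` rows of an `n × m` matrix. -/
def firstRows {n r m : ℕ} (hrn : r ≤ n) (A : Matrix (Fin n) (Fin m) ℚ) :
    Matrix (Fin r) (Fin m) ℚ :=
  A.submatrix (Fin.castLE hrn) id

lemma key_lemma {n r m : ℕ} (hrn : r ≤ n)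
    (M : Matrix (Fin n) (Fin n) ℚ) (hrank : M.rank = r)
    (hM' : IsUnit (topLeft hrn M))
    (A : Matrix (Fin n) (Fin m) ℚ) (hA : M = A * Aᵀ) :
    topLeft hrn M = firstRows hrn A * (firstRows hrn A)ᵀ ∧
    A = (firstCols hrn M * (topLeft hrn M)⁻¹) * firstRows hrn A := by
  set A' := firstRows hrn A with hA'
  have h1 : topLeft hrn M = A' * A'ᵀ := by
    subst hA
    ext i j
    simp [hA', topLeft, firstRows, mul_apply]
  have hN : firstCols hrn M = A * A'ᵀ := by
    subst hA
    ext i j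
    simp [hA', firstCols, firstRows, mul_apply]
  -- ranks
  have hrA : A.rank = r := by
    rw [hA, rank_self_mul_transpose] at hrank
    exact hrank
  have hrA' : A'.rank = r := by
    have := Matrix.rank_of_isUnit _ hM'
    rw [h1, rank_self_mul_transpose] at this
    simpa using this
  -- row spans
  have hle : Submodule.span ℚ (Set.range A') ≤ Submodule.span ℚ (Set.range A) := by
    apply Submodule.span_le.2
    rintro x ⟨k, rfl⟩
    exact Submodule.subset_span ⟨Fin.castLE hrn k, rfl⟩
  have hfin : Module.finrank ℚ (Submodule.span ℚ (Set.range A)) ≤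
      Module.finrank ℚ (Submodule.span ℚ (Set.range A')) := by
    exact ((Matrix.rank_eq_finrank_span_row A).symm.trans (hrA.trans (hrA'.symm.trans (Matrix.rank_eq_finrank_span_row A')))).le
  have hspan : Submodule.span ℚ (Set.range A') = Submodule.span ℚ (Set.range A) :=
    Submodule.eq_of_le_of_finrank_le hle hfin
  -- coefficients
  have hmem : ∀ i, A i ∈ Submodule.span ℚ (Set.range A') := by
    intro i
    rw [hspan]
    exact Submodule.subset_span ⟨i, rfl⟩
  have hex : ∀ i, ∃ c : Fin r → ℚ, ∑ k, c k • A' k = A i := fun i =>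
    (Submodule.mem_span_range_iff_exists_fun ℚ).1 (hmem i)
  choose c hc using hex
  have hAC : A = Matrix.of c * A' := by
    ext i j
    have := congrFun (hc i) j
    simpa [mul_apply, Finset.sum_apply] using this.symm
  have hdet : IsUnit (topLeft hrn M).det := (isUnit_iff_isUnit_det _).1 hM'
  refine ⟨h1, ?_⟩
  rw [hN, hAC, Matrix.mul_assoc (Matrix.of c) A' A'ᵀ, ← h1,
    Matrix.mul_nonsing_inv_cancel_right _ _ hdet]

theorem decomposition_determined_by_first_rows {n r m : ℕ} (hrn : r ≤ n)
    (M : Matrix (Fin n) (Fin n) ℚ) (hsym : M.IsSymm) (hrank : M.rank = r)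
    (hM' : IsUnit (topLeft hrn M))
    (A : Matrix (Fin n) (Fin m) ℚ) (hA : M = A * Aᵀ) :
    topLeft hrn M = firstRows hrn A * (firstRows hrn A)ᵀ ∧
    A = (firstCols hrn M * (topLeft hrn M)⁻¹) * firstRows hrn A ∧
    ∀ A₂ : Matrix (Fin n) (Fin m) ℚ, M = A₂ * A₂ᵀ →
      firstRows hrn A₂ = firstRows hrn A → A₂ = A := by
  obtain ⟨h1, h2⟩ := key_lemma hrn M hrank hM' A hA
  refine ⟨h1, h2, fun A₂ hA₂ hfr => ?_⟩
  obtain ⟨_, h2'⟩ := key_lemma hrn M hrank hM' A₂ hA₂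
  rw [h2', hfr, ← h2]
end

section
/- Let M be a symmetric n×n matrix over ℚ of rank r whose top-left r×r submatrix M' is invertible, and set R := N * M'⁻¹, where N is the n×r matrix consisting of the first r columns of M. Then the map sending an n×m matrix A to the r×m matrix A' consisting of its first r rows is a bijection from the set of n×m matrices A over ℚ with nonnegative integer entries satisfying M = A * Aᵀ, onto the set of r×m matrices A' over ℚ with nonnegative integer entries satisfying M' = A' * A'ᵀ and such that every entry of R * A' is a nonnegative integer; the inverse map is A' ↦ R * A'. -/
open Matrix

/-- A rational matrix has nonnegative integer entries if each entry is the image of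
a natural number in `ℚ`. -/
def NatEntries {a b : Type*} (X : Matrix a b ℚ) : Prop :=
  ∀ i j, ∃ k : ℕ, X i j = (k : ℚ)

lemma submatrix_mul_id' {p q t u : Type*} [Fintype q] (f : u → p)
    (X : Matrix p q ℚ) (Y : Matrix q t ℚ) :
    (X * Y).submatrix f id = X.submatrix f id * Y := by
  ext i j
  simp [Matrix.mul_apply, Matrix.submatrix]

lemma mul_self_transpose_zero {n m : ℕ} {B : Matrix (Fin n) (Fin m) ℚ}
    (h : B * Bᵀ = 0) : B = 0 := by
  ext i j
  have hii := congrFun (congrFun h i) i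
  simp only [Matrix.mul_apply, Matrix.transpose_apply, Matrix.zero_apply] at hii
  have := (Finset.sum_eq_zero_iff_of_nonneg (fun k _ => mul_self_nonneg (B i k))).mp hii
    j (Finset.mem_univ j)
  simpa using mul_self_eq_zero.mp this

lemma topLeft_symm {n r : ℕ} (hrn : r ≤ n) {M : Matrix (Fin n) (Fin n) ℚ}
    (hsym : M.IsSymm) : (topLeft hrn M)ᵀ = topLeft hrn M := by
  ext i j
  have : M (Fin.castLE hrn j) (Fin.castLE hrn i) = M (Fin.castLE hrn i) (Fin.castLE hrn j) :=
    hsym.apply _ _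
  simpa [topLeft] using this

lemma inv_topLeft_symm {n r : ℕ} (hrn : r ≤ n) {M : Matrix (Fin n) (Fin n) ℚ}
    (hsym : M.IsSymm) : (topLeft hrn M)⁻¹ᵀ = (topLeft hrn M)⁻¹ := by
  rw [Matrix.transpose_nonsing_inv, topLeft_symm hrn hsym]

lemma core {n r : ℕ} (hrn : r ≤ n)
    (M : Matrix (Fin n) (Fin n) ℚ) (hsym : M.IsSymm) (hrank : M.rank = r)
    (hM' : IsUnit (topLeft hrn M)) :
    M = firstCols hrn M * (topLeft hrn M)⁻¹ * (firstCols hrn M)ᵀ := by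
  set M' := topLeft hrn M with hM'def
  set N := firstCols hrn M with hNdef
  have hdet : IsUnit M'.det := (Matrix.isUnit_iff_isUnit_det M').mp hM'
  have hsub : LinearMap.range N.mulVecLin ≤ LinearMap.range M.mulVecLin := by
    rw [Matrix.range_mulVecLin, Matrix.range_mulVecLin]
    apply Submodule.span_mono
    rintro v ⟨j, rfl⟩
    exact ⟨Fin.castLE hrn j, rfl⟩
  have hsubm : N.submatrix (Fin.castLE hrn) (Equiv.refl (Fin r)) = M' := by
    ext i j; rfl
  have hrankN : N.rank = r := by
    have h1 : M'.rank = r := by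
      rw [Matrix.rank_of_isUnit M' hM', Fintype.card_fin]
    have h2 : M'.rank ≤ N.rank := by
      rw [← hsubm, Matrix.rank, Matrix.rank,
        Matrix.mulVecLin_submatrix, LinearMap.range_comp, LinearMap.range_comp,
        show LinearMap.funLeft ℚ ℚ ⇑(Equiv.refl (Fin r)).symm =
          LinearEquiv.funCongrLeft ℚ ℚ (Equiv.refl (Fin r)).symm from rfl,
        LinearEquiv.range, Submodule.map_top]
      exact Submodule.finrank_map_le _ _
    have h3 : N.rank ≤ r := by simpa using N.rank_le_card_width
    omega
  have heq : LinearMap.range N.mulVecLin = LinearMap.range M.mulVecLin :=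
    Submodule.eq_of_le_of_finrank_eq hsub (by
      show Module.finrank ℚ _ = Module.finrank ℚ _
      rw [← Matrix.rank, ← Matrix.rank, hrankN, hrank])
  have hcol : ∀ j, ∃ x : Fin r → ℚ, N.mulVec x = Mᵀ j := by
    intro j
    have : Mᵀ j ∈ LinearMap.range M.mulVecLin := by
      rw [Matrix.range_mulVecLin]
      exact Submodule.subset_span ⟨j, rfl⟩
    rw [← heq] at this
    exact this
  choose x hx using hcol
  set X : Matrix (Fin r) (Fin n) ℚ := Matrix.of (fun i j => x j i) with hXdef
  have hNX : N * X = M := by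
    ext i j
    have := congrFun (hx j) i
    simpa [Matrix.mul_apply, Matrix.mulVec, dotProduct, hXdef] using this
  have hfr : M.submatrix (Fin.castLE hrn) id = M' * X := by
    rw [← hNX, submatrix_mul_id']
    congr 1
  have hfrN : M.submatrix (Fin.castLE hrn) id = Nᵀ := by
    ext i j
    have : M (Fin.castLE hrn i) j = M j (Fin.castLE hrn i) := hsym.apply _ _
    simpa [Matrix.submatrix, hNdef, firstCols] using this
  have hX : X = M'⁻¹ * Nᵀ := by
    rw [← hfrN, hfr, ← Matrix.mul_assoc, Matrix.nonsing_inv_mul M' hdet, Matrix.one_mul]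
  rw [← hNX, hX, Matrix.mul_assoc]

section Key

variable {n r m : ℕ} (hrn : r ≤ n) (M : Matrix (Fin n) (Fin n) ℚ)

lemma keyB_prod (hsym : M.IsSymm) (hrank : M.rank = r)
    (hM' : IsUnit (topLeft hrn M)) (A' : Matrix (Fin r) (Fin m) ℚ)
    (h3 : A' * A'ᵀ = topLeft hrn M) :
    (firstCols hrn M * (topLeft hrn M)⁻¹ * A') *
      (firstCols hrn M * (topLeft hrn M)⁻¹ * A')ᵀ = M := by
  set M' := topLeft hrn M with hM'def
  set N := firstCols hrn M with hNdef
  have hdet : IsUnit M'.det := (Matrix.isUnit_iff_isUnit_det M').mp hM'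
  have hinv1 : M' * M'⁻¹ = 1 := Matrix.mul_nonsing_inv M' hdet
  have hcore := core hrn M hsym hrank hM'
  have hMs : M'⁻¹ᵀ = M'⁻¹ := inv_topLeft_symm hrn hsym
  simp only [Matrix.transpose_mul, hMs, ← hM'def, ← hNdef]
  rw [Matrix.mul_assoc (N * M'⁻¹) A', ← Matrix.mul_assoc A' A'ᵀ, h3,
    ← Matrix.mul_assoc M' M'⁻¹, hinv1, Matrix.one_mul]
  exact hcore.symm

lemma keyB_rows (hM' : IsUnit (topLeft hrn M)) (A' : Matrix (Fin r) (Fin m) ℚ) :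
    firstRows hrn (firstCols hrn M * (topLeft hrn M)⁻¹ * A') = A' := by
  set M' := topLeft hrn M with hM'def
  set N := firstCols hrn M with hNdef
  have hdet : IsUnit M'.det := (Matrix.isUnit_iff_isUnit_det M').mp hM'
  have hsubm : N.submatrix (Fin.castLE hrn) id = M' := by ext i j; rfl
  show (N * M'⁻¹ * A').submatrix (Fin.castLE hrn) id = A'
  rw [submatrix_mul_id', submatrix_mul_id', hsubm, Matrix.mul_nonsing_inv M' hdet,
    Matrix.one_mul]

lemma keyA (hsym : M.IsSymm) (hrank : M.rank = r)
    (hM' : IsUnit (topLeft hrn M)) (A : Matrix (Fin n) (Fin m) ℚ)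
    (hA : M = A * Aᵀ) :
    A = firstCols hrn M * (topLeft hrn M)⁻¹ * firstRows hrn A := by
  set M' := topLeft hrn M with hM'def
  set N := firstCols hrn M with hNdef
  set A' := firstRows hrn A with hA'def
  have hdet : IsUnit M'.det := (Matrix.isUnit_iff_isUnit_det M').mp hM'
  have hcore := core hrn M hsym hrank hM'
  have h1 : A * A'ᵀ = N := by
    ext i j
    have := congrFun (congrFun hA i) (Fin.castLE hrn j)
    simpa [Matrix.mul_apply, hA'def, firstRows, hNdef, firstCols, Matrix.submatrix] using this.symm
  have h3 : A' * A'ᵀ = M' := by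
    ext i j
    have := congrFun (congrFun hA (Fin.castLE hrn i)) (Fin.castLE hrn j)
    simpa [Matrix.mul_apply, hA'def, firstRows, hM'def, topLeft, Matrix.submatrix] using this.symm
  have h4 := keyB_prod hrn M hsym hrank hM' A' h3
  have h5 : A * (N * M'⁻¹ * A')ᵀ = M := by
    have hMs : M'⁻¹ᵀ = M'⁻¹ := inv_topLeft_symm hrn hsym
    simp only [Matrix.transpose_mul, hMs, ← hM'def, ← hNdef]
    rw [← Matrix.mul_assoc A A'ᵀ, h1, ← Matrix.mul_assoc]
    exact hcore.symm
  have h6 : (N * M'⁻¹ * A') * Aᵀ = M := by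
    have := congrArg Matrix.transpose h5
    rwa [Matrix.transpose_mul, Matrix.transpose_transpose, hsym] at this
  have hBB : (A - N * M'⁻¹ * A') * (A - N * M'⁻¹ * A')ᵀ = 0 := by
    rw [Matrix.transpose_sub, Matrix.sub_mul, Matrix.mul_sub, Matrix.mul_sub, h5, h6, h4, ← hA]
    simp
  have hB0 := mul_self_transpose_zero hBB
  have := sub_eq_zero.mp hB0
  exact this.symm ▸ rfl

end Key

theorem decompositions_biject {n r m : ℕ} (hrn : r ≤ n)
    (M : Matrix (Fin n) (Fin n) ℚ) (hsym : M.IsSymm) (hrank : M.rank = r)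
    (hM' : IsUnit (topLeft hrn M)) :
    Set.BijOn (fun A : Matrix (Fin n) (Fin m) ℚ => firstRows hrn A)
      {A : Matrix (Fin n) (Fin m) ℚ | NatEntries A ∧ M = A * Aᵀ}
      {A' : Matrix (Fin r) (Fin m) ℚ | NatEntries A' ∧ topLeft hrn M = A' * A'ᵀ ∧
        NatEntries (firstCols hrn M * (topLeft hrn M)⁻¹ * A')} ∧
    Set.InvOn (fun A' : Matrix (Fin r) (Fin m) ℚ => firstCols hrn M * (topLeft hrn M)⁻¹ * A')
      (fun A : Matrix (Fin n) (Fin m) ℚ => firstRows hrn A)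
      {A : Matrix (Fin n) (Fin m) ℚ | NatEntries A ∧ M = A * Aᵀ}
      {A' : Matrix (Fin r) (Fin m) ℚ | NatEntries A' ∧ topLeft hrn M = A' * A'ᵀ ∧
        NatEntries (firstCols hrn M * (topLeft hrn M)⁻¹ * A')} := by
  have hMapsTo1 : Set.MapsTo (fun A : Matrix (Fin n) (Fin m) ℚ => firstRows hrn A)
      {A : Matrix (Fin n) (Fin m) ℚ | NatEntries A ∧ M = A * Aᵀ}
      {A' : Matrix (Fin r) (Fin m) ℚ | NatEntries A' ∧ topLeft hrn M = A' * A'ᵀ ∧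
        NatEntries (firstCols hrn M * (topLeft hrn M)⁻¹ * A')} := by
    rintro A ⟨hnat, hA⟩
    have hrec := keyA hrn M hsym hrank hM' A hA
    refine ⟨fun i j => hnat _ _, ?_, ?_⟩
    · ext i j
      have := congrFun (congrFun hA (Fin.castLE hrn i)) (Fin.castLE hrn j)
      simpa [Matrix.mul_apply, firstRows, topLeft, Matrix.submatrix] using this
    · rw [← hrec]
      exact hnat
  have hMapsTo2 : Set.MapsTo
      (fun A' : Matrix (Fin r) (Fin m) ℚ => firstCols hrn M * (topLeft hrn M)⁻¹ * A')
      {A' : Matrix (Fin r) (Fin m) ℚ | NatEntries A' ∧ topLeft hrn M = A' * A'ᵀ ∧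
        NatEntries (firstCols hrn M * (topLeft hrn M)⁻¹ * A')}
      {A : Matrix (Fin n) (Fin m) ℚ | NatEntries A ∧ M = A * Aᵀ} := by
    rintro A' ⟨hnat, hprod, hnatR⟩
    exact ⟨hnatR, (keyB_prod hrn M hsym hrank hM' A' hprod.symm).symm⟩
  have hInv : Set.InvOn
      (fun A' : Matrix (Fin r) (Fin m) ℚ => firstCols hrn M * (topLeft hrn M)⁻¹ * A')
      (fun A : Matrix (Fin n) (Fin m) ℚ => firstRows hrn A)
      {A : Matrix (Fin n) (Fin m) ℚ | NatEntries A ∧ M = A * Aᵀ}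
      {A' : Matrix (Fin r) (Fin m) ℚ | NatEntries A' ∧ topLeft hrn M = A' * A'ᵀ ∧
        NatEntries (firstCols hrn M * (topLeft hrn M)⁻¹ * A')} := by
    constructor
    · rintro A ⟨hnat, hA⟩
      exact (keyA hrn M hsym hrank hM' A hA).symm
    · rintro A' ⟨hnat, hprod, hnatR⟩
      exact keyB_rows hrn M hM' A'
  exact ⟨hInv.bijOn hMapsTo1 hMapsTo2, hInv⟩
end
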